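/- arXiv:2505.06209 — 3 statements merged into one kernel-verified Lean document; each statement's English description precedes it below -/
import Mathlib

section
/- For an Ising model on a finite graph with nonnegative couplings |J_e| and fields |h_x| = h_x^+ + h_x^-, where h_x^+ = max(h_x, 0) and h_x^- = |min(h_x, 0)|, the ratio of partition functions satisfies Z_{J,h} / Z_{|J|,|h|} ≥ ∏_x exp(-2 h_x^-) when J_e ≥ 0 for all edges (i.e., only the field signs differ). -/
open Finset

/-- The spin value of a Boolean: `true ↦ +1`, `false ↦ -1`. -/
noncomputable def sp (b : Bool) : ℝ := if b then 1 else -1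

variable {V : Type*} [Fintype V] [DecidableEq V]

/-- Partition function of the Ising model on a finite graph with edge set `E`,
couplings `J` and external fields `h`. -/
noncomputable def gpart (E : Finset (V × V)) (J : V × V → ℝ) (h : V → ℝ) : ℝ :=
  ∑ σ : V → Bool,
    Real.exp ((∑ e ∈ E, J e * sp (σ e.1) * sp (σ e.2)) + ∑ x : V, h x * sp (σ x))

/-- Gibbs expectation of an observable for the Ising model on a finite graph. -/
noncomputable def gexp (E : Finset (V × V)) (J : V × V → ℝ) (h : V → ℝ)
    (f : (V → Bool) → ℝ) : ℝ :=
  (∑ σ : V → Bool,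
      Real.exp ((∑ e ∈ E, J e * sp (σ e.1) * sp (σ e.2)) + ∑ x : V, h x * sp (σ x)) * f σ) /
    gpart E J h

/-- Covariance of the spins at `i` and `j` under the Gibbs measure. -/
noncomputable def gcov (E : Finset (V × V)) (J : V × V → ℝ) (h : V → ℝ) (i j : V) : ℝ :=
  gexp E J h (fun σ => sp (σ i) * sp (σ j)) -
    gexp E J h (fun σ => sp (σ i)) * gexp E J h (fun σ => sp (σ j))

lemma sp_le_one (b : Bool) : sp b ≤ 1 := by
  unfold sp; split <;> norm_num

lemma gpart_pos (E : Finset (V × V)) (J : V × V → ℝ) (h : V → ℝ) : 0 < gpart E J h := by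
  unfold gpart
  apply Finset.sum_pos (fun σ _ => Real.exp_pos _)
  exact univ_nonempty

theorem partition_ratio_lower_bound (E : Finset (V × V)) (J : V × V → ℝ) (h : V → ℝ)
    (hJ : ∀ e, 0 ≤ J e) :
    gpart E J h / gpart E J (fun x => |h x|) ≥
      ∏ x : V, Real.exp (-2 * |min (h x) 0|) := by
  have key : ∀ x : V, -2 * |min (h x) 0| = h x - |h x| := by
    intro x
    rcases le_or_gt 0 (h x) with hx | hx
    · rw [min_eq_right hx, abs_of_nonneg hx]; simp
    · rw [min_eq_left hx.le, abs_of_neg hx]; ring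
  have hprod : ∏ x : V, Real.exp (-2 * |min (h x) 0|)
      = Real.exp (∑ x : V, (h x - |h x|)) := by
    rw [Real.exp_sum]
    exact Finset.prod_congr rfl fun x _ => by rw [key x]
  rw [hprod, ge_iff_le, le_div_iff₀ (gpart_pos E J _)]
  unfold gpart
  rw [Finset.mul_sum]
  apply Finset.sum_le_sum
  intro σ _
  rw [← Real.exp_add, Real.exp_le_exp]
  have : ∑ x : V, (h x - |h x|) + ∑ x : V, |h x| * sp (σ x) ≤ ∑ x : V, h x * sp (σ x) := by
    rw [← Finset.sum_add_distrib]
    apply Finset.sum_le_sum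
    intro x _
    have hc : h x - |h x| ≤ 0 := sub_nonpos.mpr (le_abs_self _)
    nlinarith [sp_le_one (σ x), mul_le_of_le_one_right (neg_nonneg.mpr hc) (sp_le_one (σ x))]
  linarith
end

section
/- For the one-dimensional Ising model on {0,…,N} with couplings J_x > 0 and arbitrary signed external fields h_x ∈ ℝ, the endpoint covariance satisfies Cov(σ_0, σ_N) ≤ ( ∏_{x=0}^{N-1} 4 tanh(J_x)/(1+tanh(J_x))² ) · 4 exp( -2 |Σ_{x=0}^N h_x| ) / ( 1 + exp( -2 Σ_{x=0}^N |h_x| ) )². -/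
open Finset

/-- Hamiltonian of the 1D Ising chain on `{0, …, N}` with couplings `J` and fields `h`. -/
noncomputable def ham (N : ℕ) (J : Fin N → ℝ) (h : Fin (N + 1) → ℝ)
    (σ : Fin (N + 1) → Bool) : ℝ :=
  -(∑ x : Fin N, J x * sp (σ x.castSucc) * sp (σ x.succ)) - ∑ x : Fin (N + 1), h x * sp (σ x)

/-- Partition function of the 1D Ising chain. -/
noncomputable def part (N : ℕ) (J : Fin N → ℝ) (h : Fin (N + 1) → ℝ) : ℝ :=
  ∑ σ : Fin (N + 1) → Bool, Real.exp (-(ham N J h σ))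

/-- Gibbs probability of a configuration. -/
noncomputable def gibbs (N : ℕ) (J : Fin N → ℝ) (h : Fin (N + 1) → ℝ)
    (σ : Fin (N + 1) → Bool) : ℝ :=
  Real.exp (-(ham N J h σ)) / part N J h

/-- Gibbs expectation of an observable. -/
noncomputable def gibbsE (N : ℕ) (J : Fin N → ℝ) (h : Fin (N + 1) → ℝ)
    (f : (Fin (N + 1) → Bool) → ℝ) : ℝ :=
  ∑ σ : Fin (N + 1) → Bool, gibbs N J h σ * f σ

/-- Covariance of the endpoint spins `σ_0` and `σ_N` under the Gibbs measure. -/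
noncomputable def covEnds (N : ℕ) (J : Fin N → ℝ) (h : Fin (N + 1) → ℝ) : ℝ :=
  gibbsE N J h (fun σ => sp (σ 0) * sp (σ (Fin.last N))) -
    gibbsE N J h (fun σ => sp (σ 0)) * gibbsE N J h (fun σ => sp (σ (Fin.last N)))

@[simp] lemma sp_true : sp true = 1 := rfl
@[simp] lemma sp_false : sp false = -1 := rfl

noncomputable def wt (N : ℕ) (J : Fin N → ℝ) (h : Fin (N + 1) → ℝ)
    (σ : Fin (N + 1) → Bool) : ℝ :=
  Real.exp ((∑ x : Fin N, J x * sp (σ x.castSucc) * sp (σ x.succ)) +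
    ∑ x : Fin (N + 1), h x * sp (σ x))

lemma sum_pi_succ {M : Type*} [AddCommMonoid M] (n : ℕ) (f : (Fin (n + 1) → Bool) → M) :
    ∑ σ : Fin (n + 1) → Bool, f σ =
      ∑ b : Bool, ∑ σ : Fin n → Bool, f (Fin.cons b σ) := by
  rw [← Fintype.sum_equiv (Fin.consEquiv fun _ => Bool)
    (fun p : Bool × (Fin n → Bool) => f (Fin.cons p.1 p.2)) f (fun p => rfl),
    Fintype.sum_prod_type]

lemma wt_cons (N : ℕ) (J : Fin (N + 1) → ℝ) (h : Fin (N + 2) → ℝ) (b : Bool)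
    (σ : Fin (N + 1) → Bool) :
    wt (N + 1) J h (Fin.cons b σ) =
      Real.exp (J 0 * sp b * sp (σ 0) + h 0 * sp b) *
        wt N (fun i => J i.succ) (fun i => h i.succ) σ := by
  rw [wt, wt, ← Real.exp_add]
  congr 1
  simp only [Fin.sum_univ_succ, Fin.cons_zero, Fin.cons_succ, Fin.castSucc_zero,
    ← Fin.succ_castSucc]
  ring

/-- Partition sum with the first spin fixed to `b`. -/
noncomputable def Zb (N : ℕ) (J : Fin N → ℝ) (h : Fin (N + 1) → ℝ) (b : Bool) : ℝ :=
  ∑ σ : Fin N → Bool, wt N J h (Fin.cons b σ)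

/-- Last-site magnetization sum with the first spin fixed to `b`. -/
noncomputable def Bb (N : ℕ) (J : Fin N → ℝ) (h : Fin (N + 1) → ℝ) (b : Bool) : ℝ :=
  ∑ σ : Fin N → Bool, wt N J h (Fin.cons b σ) *
    sp ((Fin.cons b σ : Fin (N + 1) → Bool) (Fin.last N))

lemma Zb_succ (N : ℕ) (J : Fin (N + 1) → ℝ) (h : Fin (N + 2) → ℝ) (b : Bool) :
    Zb (N + 1) J h b = ∑ b' : Bool, Real.exp (J 0 * sp b * sp b' + h 0 * sp b) *
      Zb N (fun i => J i.succ) (fun i => h i.succ) b' := by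
  rw [Zb, sum_pi_succ]
  refine Finset.sum_congr rfl fun b' _ => ?_
  rw [Zb, Finset.mul_sum]
  refine Finset.sum_congr rfl fun σ _ => ?_
  rw [wt_cons]
  simp [Fin.cons_zero]

lemma Bb_succ (N : ℕ) (J : Fin (N + 1) → ℝ) (h : Fin (N + 2) → ℝ) (b : Bool) :
    Bb (N + 1) J h b = ∑ b' : Bool, Real.exp (J 0 * sp b * sp b' + h 0 * sp b) *
      Bb N (fun i => J i.succ) (fun i => h i.succ) b' := by
  rw [Bb, sum_pi_succ]
  refine Finset.sum_congr rfl fun b' _ => ?_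
  rw [Bb, Finset.mul_sum]
  refine Finset.sum_congr rfl fun σ _ => ?_
  rw [wt_cons]
  have hlast : (Fin.cons b (Fin.cons b' σ) : Fin (N + 2) → Bool) (Fin.last (N + 1)) =
      (Fin.cons b' σ : Fin (N + 1) → Bool) (Fin.last N) := by
    rw [show Fin.last (N + 1) = (Fin.last N).succ from rfl, Fin.cons_succ]
  rw [hlast]
  simp only [Fin.cons_zero]
  ring

lemma G_eq (N : ℕ) (J : Fin N → ℝ) (h : Fin (N + 1) → ℝ) :
    Zb N J h true * Bb N J h false - Zb N J h false * Bb N J h true =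
      -2 * ∏ x : Fin N, 2 * Real.sinh (2 * J x) := by
  induction N with
  | zero =>
    have e1 : Real.exp (h 0) * Real.exp (-(h 0)) = 1 := by
      rw [← Real.exp_add]; simp
    simp only [Zb, Bb, wt]
    simp [Fin.sum_univ_succ, sp, Fin.last]
    nlinarith [e1]
  | succ n ih =>
    rw [Zb_succ, Zb_succ, Bb_succ, Bb_succ]
    specialize ih (fun i => J i.succ) (fun i => h i.succ)
    rw [Fin.prod_univ_succ]
    simp only [Fintype.sum_bool, sp_true, sp_false]
    set zt := Zb n (fun i => J i.succ) (fun i => h i.succ) true with hzt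
    set zf := Zb n (fun i => J i.succ) (fun i => h i.succ) false with hzf
    set bt := Bb n (fun i => J i.succ) (fun i => h i.succ) true with hbt
    set bf := Bb n (fun i => J i.succ) (fun i => h i.succ) false with hbf
    set P := ∏ i : Fin n, 2 * Real.sinh (2 * J i.succ) with hP
    have h1 : Real.exp (J 0 * 1 * 1 + h 0 * 1) * Real.exp (J 0 * -1 * -1 + h 0 * -1)
        = Real.exp (2 * J 0) := by
      rw [← Real.exp_add]; congr 1; ring
    have h2 : Real.exp (J 0 * 1 * -1 + h 0 * 1) * Real.exp (J 0 * -1 * 1 + h 0 * -1)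
        = Real.exp (-(2 * J 0)) := by
      rw [← Real.exp_add]; congr 1; ring
    have h3 : 2 * Real.sinh (2 * J 0) = Real.exp (2 * J 0) - Real.exp (-(2 * J 0)) := by
      rw [Real.sinh_eq]; ring
    linear_combination (zt * bf - zf * bt) * h1 - (zt * bf - zf * bt) * h2 +
      (Real.exp (2 * J 0) - Real.exp (-(2 * J 0))) * ih + 2 * P * h3


lemma exp_neg_ham (N : ℕ) (J : Fin N → ℝ) (h : Fin (N + 1) → ℝ) (σ : Fin (N + 1) → Bool) :
    Real.exp (-(ham N J h σ)) = wt N J h σ := by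
  rw [ham, wt]; congr 1; ring

lemma part_eq (N : ℕ) (J : Fin N → ℝ) (h : Fin (N + 1) → ℝ) :
    part N J h = Zb N J h true + Zb N J h false := by
  rw [part]
  simp_rw [exp_neg_ham]
  rw [sum_pi_succ]
  simp [Zb]

lemma num_first (N : ℕ) (J : Fin N → ℝ) (h : Fin (N + 1) → ℝ) :
    ∑ σ : Fin (N + 1) → Bool, wt N J h σ * sp (σ 0) = Zb N J h true - Zb N J h false := by
  rw [sum_pi_succ]
  simp [Zb, Fin.cons_zero, ← Finset.sum_neg_distrib, sub_eq_add_neg]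

lemma num_last (N : ℕ) (J : Fin N → ℝ) (h : Fin (N + 1) → ℝ) :
    ∑ σ : Fin (N + 1) → Bool, wt N J h σ * sp (σ (Fin.last N)) =
      Bb N J h true + Bb N J h false := by
  rw [sum_pi_succ]
  simp [Bb]

lemma num_both (N : ℕ) (J : Fin N → ℝ) (h : Fin (N + 1) → ℝ) :
    ∑ σ : Fin (N + 1) → Bool, wt N J h σ * (sp (σ 0) * sp (σ (Fin.last N))) =
      Bb N J h true - Bb N J h false := by
  rw [sum_pi_succ]
  simp only [Fintype.sum_bool, Fin.cons_zero, sp_true, sp_false, one_mul, neg_one_mul]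
  rw [Bb, Bb]
  simp only [mul_neg, Finset.sum_neg_distrib, sub_eq_add_neg]


lemma gibbsE_eq (N : ℕ) (J : Fin N → ℝ) (h : Fin (N + 1) → ℝ)
    (f : (Fin (N + 1) → Bool) → ℝ) :
    gibbsE N J h f = (∑ σ : Fin (N + 1) → Bool, wt N J h σ * f σ) / part N J h := by
  rw [gibbsE, Finset.sum_div]
  exact Finset.sum_congr rfl fun σ _ => by rw [gibbs, exp_neg_ham, div_mul_eq_mul_div]

lemma Zb_pos (N : ℕ) (J : Fin N → ℝ) (h : Fin (N + 1) → ℝ) (b : Bool) :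
    0 < Zb N J h b :=
  Finset.sum_pos (fun σ _ => Real.exp_pos _) Finset.univ_nonempty

lemma part_pos (N : ℕ) (J : Fin N → ℝ) (h : Fin (N + 1) → ℝ) : 0 < part N J h := by
  rw [part_eq]
  have := Zb_pos N J h true
  have := Zb_pos N J h false
  linarith

lemma covEnds_eq (N : ℕ) (J : Fin N → ℝ) (h : Fin (N + 1) → ℝ) :
    covEnds N J h = 4 * (∏ x : Fin N, 2 * Real.sinh (2 * J x)) / (part N J h) ^ 2 := by
  have hG := G_eq N J h
  rw [covEnds, gibbsE_eq, gibbsE_eq, gibbsE_eq, num_first, num_last, num_both, part_eq]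
  set zt := Zb N J h true
  set zf := Zb N J h false
  set bt := Bb N J h true
  set bf := Bb N J h false
  have hZ : zt + zf ≠ 0 := by
    have := Zb_pos N J h true; have := Zb_pos N J h false; positivity
  have step : (bt - bf) / (zt + zf) - (zt - zf) / (zt + zf) * ((bt + bf) / (zt + zf)) =
      ((bt - bf) * (zt + zf) - (zt - zf) * (bt + bf)) / (zt + zf) ^ 2 := by
    field_simp
  rw [step]
  congr 1
  linear_combination (-2 : ℝ) * hG

lemma tanh_factor (a : ℝ) :
    4 * Real.tanh a / (1 + Real.tanh a) ^ 2 = 2 * Real.sinh (2 * a) * Real.exp (-(2 * a)) := by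
  have hc : (0 : ℝ) < Real.cosh a := Real.cosh_pos a
  have h1 : 1 + Real.tanh a = Real.exp a / Real.cosh a := by
    rw [Real.tanh_eq_sinh_div_cosh, ← Real.cosh_add_sinh]
    field_simp
  rw [h1, Real.tanh_eq_sinh_div_cosh, Real.sinh_two_mul]
  have he : Real.exp (-(2 * a)) * Real.exp a ^ 2 = 1 := by
    rw [sq, ← Real.exp_add, ← Real.exp_add, ← Real.exp_zero]
    congr 1; ring
  have hexp := (Real.exp_pos a).ne'
  field_simp
  linear_combination (-(4 * Real.sinh a)) * he

lemma prod_tanh (N : ℕ) (J : Fin N → ℝ) :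
    ∏ x : Fin N, 4 * Real.tanh (J x) / (1 + Real.tanh (J x)) ^ 2 =
      (∏ x : Fin N, 2 * Real.sinh (2 * J x)) * Real.exp (-(2 * ∑ x : Fin N, J x)) := by
  have : Real.exp (-(2 * ∑ x : Fin N, J x)) = ∏ x : Fin N, Real.exp (-(2 * J x)) := by
    rw [← Real.exp_sum]
    congr 1
    rw [Finset.mul_sum, ← Finset.sum_neg_distrib]
  rw [this, ← Finset.prod_mul_distrib]
  exact Finset.prod_congr rfl fun x _ => tanh_factor (J x)

lemma wt_const (N : ℕ) (J : Fin N → ℝ) (h : Fin (N + 1) → ℝ) (b : Bool) :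
    wt N J h (fun _ => b) =
      Real.exp ((∑ x : Fin N, J x) + sp b * ∑ x : Fin (N + 1), h x) := by
  rw [wt]
  congr 1
  have hb : sp b * sp b = 1 := by cases b <;> simp
  rw [Finset.mul_sum]
  congr 1
  · exact Finset.sum_congr rfl fun x _ => by rw [mul_assoc, hb, mul_one]
  · exact Finset.sum_congr rfl fun x _ => by ring

lemma part_lower (N : ℕ) (J : Fin N → ℝ) (h : Fin (N + 1) → ℝ) :
    Real.exp ((∑ x : Fin N, J x) + ∑ x : Fin (N + 1), h x) +
      Real.exp ((∑ x : Fin N, J x) - ∑ x : Fin (N + 1), h x) ≤ part N J h := by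
  rw [part]
  simp_rw [exp_neg_ham]
  have hne : (fun _ => true : Fin (N + 1) → Bool) ≠ (fun _ => false) := by
    intro hc
    exact Bool.noConfusion (congrFun hc 0)
  calc Real.exp ((∑ x : Fin N, J x) + ∑ x : Fin (N + 1), h x) +
        Real.exp ((∑ x : Fin N, J x) - ∑ x : Fin (N + 1), h x)
      = ∑ σ ∈ ({(fun _ => true), (fun _ => false)} :
          Finset (Fin (N + 1) → Bool)), wt N J h σ := by
        rw [Finset.sum_pair hne, wt_const, wt_const]
        simp [sp, sub_eq_add_neg]
    _ ≤ ∑ σ : Fin (N + 1) → Bool, wt N J h σ :=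
        Finset.sum_le_sum_of_subset_of_nonneg (Finset.subset_univ _)
          (fun σ _ _ => (Real.exp_pos _).le)


theorem covariance_upper_bound_signed (N : ℕ) (J : Fin N → ℝ)
    (h : Fin (N + 1) → ℝ) (hJ : ∀ x, 0 < J x) :
    covEnds N J h ≤
      (∏ x : Fin N, 4 * Real.tanh (J x) / (1 + Real.tanh (J x)) ^ 2) *
        (4 * Real.exp (-2 * |∑ x, h x|) / (1 + Real.exp (-2 * ∑ x, |h x|)) ^ 2) := by
  rw [covEnds_eq, prod_tanh]
  set A := ∑ x : Fin N, J x with hA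
  set H := ∑ x, h x with hH
  set S := ∑ x, |h x| with hS
  set P := ∏ x : Fin N, 2 * Real.sinh (2 * J x) with hPdef
  have hP : 0 < P := Finset.prod_pos fun x _ => by
    have := Real.sinh_pos_iff.mpr (by linarith [hJ x] : (0:ℝ) < 2 * J x)
    linarith
  have hZpos := part_pos N J h
  have hQ : (0:ℝ) < 1 + Real.exp (-2 * S) := by positivity
  have hHS : |H| ≤ S := Finset.abs_sum_le_sum_abs _ _
  have hL : Real.exp (A + |H|) * (1 + Real.exp (-2 * S)) ≤ part N J h := by
    refine le_trans ?_ (part_lower N J h)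
    rw [mul_add, mul_one, ← Real.exp_add]
    rcases abs_cases H with ⟨he, hs⟩ | ⟨he, hs⟩
    · rw [he]
      have h2 : Real.exp (A + H + -2 * S) ≤ Real.exp (A - H) :=
        Real.exp_le_exp.mpr (by rw [he] at hHS; linarith)
      linarith
    · rw [he]
      have h1 : Real.exp (A + -H) = Real.exp (A - H) := by ring_nf
      have h2 : Real.exp (A + -H + -2 * S) ≤ Real.exp (A + H) :=
        Real.exp_le_exp.mpr (by rw [he] at hHS; linarith)
      linarith
  have key : P * Real.exp (-(2 * A)) * (4 * Real.exp (-2 * |H|) / (1 + Real.exp (-2 * S)) ^ 2)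
      = 4 * P / (Real.exp (A + |H|) * (1 + Real.exp (-2 * S))) ^ 2 := by
    have e1 : Real.exp (-(2 * A)) * Real.exp (-(2 * |H|)) * Real.exp (A + |H|) ^ 2 = 1 := by
      rw [sq, ← Real.exp_add, ← Real.exp_add, ← Real.exp_add, ← Real.exp_zero]
      congr 1; ring
    have hE : Real.exp (A + |H|) ≠ 0 := (Real.exp_pos _).ne'
    simp only [neg_mul]
    field_simp
    linear_combination e1
  rw [key]
  gcongr
end

section
/- Let X_0,…,X_N be independent Poisson random variables with rates h_x ≥ 0, and for each edge x ∈ {0,…,N-1} define the event A_x = {Σ_{y≤x} X_y is even}. Let t_0,…,t_{N-1} ∈ [0,1] and define f_x = 1_{A_x} + t_x·1_{A_x^c}. Then, conditionally on {Σ_{y=0}^N X_y even}, E[ ∏_x f_x | Σ X_y even ] ≥ ∏_x E[ f_x | Σ X_y even ] ≥ ∏_x (1+t_x)/2. -/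
open Finset

/-- Total number of arrivals of the lattice current `nL` at the vertex `v` of `{0, …, N}`
(edge `x` joins vertices `x` and `x+1`). -/
def touch (N : ℕ) (nL : Fin N → ℕ) (v : Fin (N + 1)) : ℕ :=
  ∑ x : Fin N, if v = x.castSucc ∨ v = x.succ then nL x else 0

/-- The sum of the ghost current over the vertices to the left of the edge `x`
(i.e. over vertices `y ≤ x`). -/
def lsum (N : ℕ) (ng : Fin (N + 1) → ℕ) (x : Fin N) : ℕ :=
  ∑ y : Fin (N + 1), if (y : ℕ) ≤ (x : ℕ) then ng y else 0

/-- The sum of the ghost current over the vertices to the right of the edge `x`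
(i.e. over vertices `y ≥ x + 1`). -/
def rsum (N : ℕ) (ng : Fin (N + 1) → ℕ) (x : Fin N) : ℕ :=
  ∑ y : Fin (N + 1), if (x : ℕ) + 1 ≤ (y : ℕ) then ng y else 0

/-- The Poisson probability mass function with rate `r`. -/
noncomputable def poisPMF (r : ℝ) (k : ℕ) : ℝ := Real.exp (-r) * r ^ k / (Nat.factorial k)

/-- Conditional Gibbs/Poisson expectation of `g` given the event `B`,
under the product Poisson measure with rates `h`. -/
noncomputable def condE (N : ℕ) (h : Fin (N + 1) → ℝ)
    (B : (Fin (N + 1) → ℕ) → Prop) [DecidablePred B]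
    (g : (Fin (N + 1) → ℕ) → ℝ) : ℝ :=
  (∑' X : Fin (N + 1) → ℕ, if B X then g X * ∏ x, poisPMF (h x) (X x) else 0) /
    (∑' X : Fin (N + 1) → ℕ, if B X then ∏ x, poisPMF (h x) (X x) else 0)

lemma pois_eq (r : ℝ) (s : ℝ) (k : ℕ) : s ^ k * poisPMF r k = Real.exp (-r) * ((s*r) ^ k / (Nat.factorial k)) := by
  simp [poisPMF, mul_pow]; ring

lemma summable_sign_pois (r s : ℝ) : Summable (fun k => s ^ k * poisPMF r k) := by
  simp only [pois_eq]
  exact (Real.summable_pow_div_factorial (s*r)).mul_left _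

lemma tsum_sign_pois (r s : ℝ) : ∑' k, s ^ k * poisPMF r k = Real.exp (s * r - r) := by
  simp only [pois_eq]
  rw [tsum_mul_left]
  have : ∑' k : ℕ, (s*r) ^ k / (Nat.factorial k) = Real.exp (s*r) := by
    rw [Real.exp_eq_exp_ℝ, NormedSpace.exp_eq_tsum_div]
  rw [this, ← Real.exp_add]; ring_nf

lemma summable_pois (r : ℝ) : Summable (poisPMF r) := by
  have := summable_sign_pois r 1; simpa using this

lemma tsum_pois (r : ℝ) : ∑' k, poisPMF r k = 1 := by
  have := tsum_sign_pois r 1; simpa using this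

lemma tsum_pi_prod : ∀ (n : ℕ) (g : Fin n → ℕ → ℝ), (∀ y, Summable (g y)) →
    Summable (fun X : Fin n → ℕ => ∏ y, g y (X y)) ∧
    ∑' X : Fin n → ℕ, ∏ y, g y (X y) = ∏ y, ∑' k, g y k := by
  intro n
  induction n with
  | zero =>
    intro g _
    refine ⟨Summable.of_finite, by simp [tsum_fintype]⟩
  | succ n ih =>
    intro g hg
    obtain ⟨hS, hT⟩ := ih (fun y => g y.succ) (fun y => hg y.succ)
    set G : (Fin n → ℕ) → ℝ := fun X => ∏ y, g y.succ (X y) with hG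
    have he : ∀ X : Fin (n+1) → ℕ, ∏ y, g y (X y) = g 0 (X 0) * G (fun i => X i.succ) := by
      intro X; rw [Fin.prod_univ_succ]
    have hnf : Summable (fun k => ‖g 0 k‖) := (hg 0).abs.congr (by simp [Real.norm_eq_abs])
    have hnG : Summable (fun X => ‖G X‖) := hS.abs.congr (by simp [Real.norm_eq_abs])
    have hprod : Summable (fun z : ℕ × (Fin n → ℕ) => g 0 z.1 * G z.2) :=
      (hnf.mul_norm hnG).of_norm
    let e : (Fin (n+1) → ℕ) ≃ ℕ × (Fin n → ℕ) := (Fin.consEquiv (fun _ : Fin (n+1) => ℕ)).symm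
    have hcomp : Summable (fun X : Fin (n+1) → ℕ => ∏ y, g y (X y)) := by
      have := hprod.comp_injective e.injective
      refine this.congr ?_
      intro X; rw [he]; rfl
    refine ⟨hcomp, ?_⟩
    have h1 : ∑' X : Fin (n+1) → ℕ, ∏ y, g y (X y)
        = ∑' z : ℕ × (Fin n → ℕ), g 0 z.1 * G z.2 := by
      rw [← e.tsum_eq (fun z : ℕ × (Fin n → ℕ) => g 0 z.1 * G z.2)]
      exact tsum_congr fun X => by rw [he]; rfl
    rw [h1, ← tsum_mul_tsum_of_summable_norm hnf hnG, Fin.prod_univ_succ, hT]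

namespace FKG
variable (N : ℕ) (h : Fin (N + 1) → ℝ)

/-- sign observable -/
noncomputable def eps (c : Fin (N + 1) → ℕ) (X : Fin (N + 1) → ℕ) : ℝ :=
  (-1 : ℝ) ^ (∑ y, c y * X y)

/-- its mean under the unconditioned product Poisson -/
noncomputable def mm (c : Fin (N + 1) → ℕ) : ℝ :=
  ∏ y, if Even (c y) then (1 : ℝ) else Real.exp (-(2 * h y))

lemma eps_mul (c d X) : eps N c X * eps N d X = eps N (c + d) X := by
  simp only [eps, ← pow_add, ← Finset.sum_add_distrib, Pi.add_apply, add_mul]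

lemma eps_one (X) : eps N 1 X = (-1 : ℝ) ^ (∑ y, X y) := by
  simp [eps]

lemma eps_zero (X) : eps N 0 X = 1 := by simp [eps]

lemma mm_pos (c) : 0 < mm N h c := by
  apply Finset.prod_pos; intro y _; split
  · norm_num
  · exact Real.exp_pos _

lemma mm_le_one (hh : ∀ x, 0 ≤ h x) (c) : mm N h c ≤ 1 := by
  apply Finset.prod_le_one
  · intro y _; split
    · norm_num
    · exact (Real.exp_pos _).le
  · intro y _; split
    · exact le_rfl
    · have := Real.exp_le_exp.mpr (show -(2 * h y) ≤ 0 by nlinarith [hh y])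
      simpa using this

lemma summable_epsW (c) :
    Summable (fun X : Fin (N + 1) → ℕ => eps N c X * ∏ x, poisPMF (h x) (X x)) ∧
    ∑' X : Fin (N + 1) → ℕ, eps N c X * ∏ x, poisPMF (h x) (X x) = mm N h c := by
  have hpt : ∀ X : Fin (N + 1) → ℕ, eps N c X * ∏ x, poisPMF (h x) (X x)
      = ∏ y, (((-1 : ℝ) ^ (c y)) ^ (X y) * poisPMF (h y) (X y)) := by
    intro X
    rw [Finset.prod_mul_distrib, eps]
    congr 1
    rw [← Finset.prod_pow_eq_pow_sum]
    exact Finset.prod_congr rfl fun y _ => by rw [← pow_mul]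
  have hsum : ∀ y : Fin (N + 1),
      Summable (fun k => ((-1 : ℝ) ^ (c y)) ^ k * poisPMF (h y) k) :=
    fun y => summable_sign_pois _ _
  obtain ⟨hS, hT⟩ := tsum_pi_prod (N + 1)
    (fun y k => ((-1 : ℝ) ^ (c y)) ^ k * poisPMF (h y) k) hsum
  constructor
  · exact hS.congr fun X => (hpt X).symm
  · rw [tsum_congr hpt, hT]
    apply Finset.prod_congr rfl
    intro y _
    rw [tsum_sign_pois]
    rcases Nat.even_or_odd (c y) with he | ho
    · rw [he.neg_one_pow, if_pos he]; simp
    · rw [ho.neg_one_pow, if_neg (by simpa using Nat.not_even_iff_odd.mpr ho)]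
      ring_nf

/-- conditional (unnormalised) weight of a sign observable -/
noncomputable def nu (c : Fin (N + 1) → ℕ) : ℝ := (mm N h c + mm N h (c + 1)) / 2

lemma nu_pos (c) : 0 < nu N h c := by
  have := mm_pos N h c; have := mm_pos N h (c + 1); unfold nu; linarith

section Dec
variable [DecidablePred (fun X : Fin (N + 1) → ℕ => Even (∑ y, X y))]

lemma numEps_pt (c) (X : Fin (N + 1) → ℕ) :
    (if Even (∑ y, X y) then eps N c X * ∏ x, poisPMF (h x) (X x) else 0)
      = (eps N c X * ∏ x, poisPMF (h x) (X x)
         + eps N (c + 1) X * ∏ x, poisPMF (h x) (X x)) / 2 := by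
  have h1 : eps N (c + 1) X = eps N c X * (-1 : ℝ) ^ (∑ y, X y) := by
    rw [← eps_mul N c 1 X]; congr 1; simp [eps]
  rw [h1]
  by_cases hE : Even (∑ y, X y)
  · rw [if_pos hE, hE.neg_one_pow]; ring
  · rw [if_neg hE, (Nat.not_even_iff_odd.mp hE).neg_one_pow]; ring

lemma summable_numEps (c) :
    Summable (fun X : Fin (N + 1) → ℕ =>
      if Even (∑ y, X y) then eps N c X * ∏ x, poisPMF (h x) (X x) else 0) := by
  rw [show (fun X : Fin (N + 1) → ℕ =>
      if Even (∑ y, X y) then eps N c X * ∏ x, poisPMF (h x) (X x) else 0)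
    = fun X => (eps N c X * ∏ x, poisPMF (h x) (X x)
         + eps N (c + 1) X * ∏ x, poisPMF (h x) (X x)) / 2 from funext (numEps_pt N h c)]
  exact ((summable_epsW N h c).1.add (summable_epsW N h (c + 1)).1).div_const 2

lemma tsum_numEps (c) :
    ∑' X : Fin (N + 1) → ℕ,
      (if Even (∑ y, X y) then eps N c X * ∏ x, poisPMF (h x) (X x) else 0) = nu N h c := by
  rw [tsum_congr (numEps_pt N h c)]
  unfold nu
  rw [← (summable_epsW N h c).2, ← (summable_epsW N h (c + 1)).2, ← Summable.tsum_add
    (summable_epsW N h c).1 (summable_epsW N h (c + 1)).1]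
  exact tsum_div_const

end Dec

lemma grif_core {p q r w : ℝ} (hp0 : 0 < p) (hp1 : p ≤ 1) (hq0 : 0 < q) (hq1 : q ≤ 1)
    (hr0 : 0 < r) (hr1 : r ≤ 1) (hw0 : 0 < w) (hw1 : w ≤ 1) :
    (p * q + r * w) * (p * r + q * w) ≤ (q * r + p * w) * (1 + p * q * r * w) := by
  have key : (q * r + p * w) * (1 + p * q * r * w) - (p * q + r * w) * (p * r + q * w)
      = q * r * (1 - p ^ 2) * (1 - w ^ 2) + p * w * (1 - q ^ 2) * (1 - r ^ 2) := by ring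
  nlinarith [mul_nonneg (mul_nonneg (mul_nonneg hq0.le hr0.le)
      (by nlinarith : (0:ℝ) ≤ 1 - p ^ 2)) (by nlinarith : (0:ℝ) ≤ 1 - w ^ 2),
    mul_nonneg (mul_nonneg (mul_nonneg hp0.le hw0.le)
      (by nlinarith : (0:ℝ) ≤ 1 - q ^ 2)) (by nlinarith : (0:ℝ) ≤ 1 - r ^ 2)]

/-- Griffiths-type two point inequality -/
lemma griffiths (hh : ∀ x, 0 ≤ h x) (b c : Fin (N + 1) → ℕ) :
    nu N h b * nu N h c ≤ nu N h (b + c) * nu N h 0 := by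
  classical
  set a : Fin (N + 1) → ℝ := fun y => Real.exp (-(2 * h y)) with ha
  have ha01 : ∀ y, 0 < a y ∧ a y ≤ 1 := by
    intro y
    refine ⟨Real.exp_pos _, ?_⟩
    rw [ha, ← Real.exp_zero]
    exact Real.exp_le_exp.mpr (by nlinarith [hh y])
  have bound : ∀ (f : Fin (N+1) → Prop) (inst : DecidablePred f),
      0 < (∏ y, if f y then a y else 1) ∧ (∏ y, if f y then a y else 1) ≤ 1 := by
    intro f inst
    constructor
    · apply Finset.prod_pos; intro y _; split
      · exact (ha01 y).1
      · norm_num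
    · apply Finset.prod_le_one
      · intro y _; split
        · exact (ha01 y).1.le
        · norm_num
      · intro y _; split
        · exact (ha01 y).2
        · exact le_rfl
  obtain ⟨hp0, hp1⟩ := bound (fun y => ¬Even (b y) ∧ ¬Even (c y)) inferInstance
  obtain ⟨hq0, hq1⟩ := bound (fun y => ¬Even (b y) ∧ Even (c y)) inferInstance
  obtain ⟨hr0, hr1⟩ := bound (fun y => Even (b y) ∧ ¬Even (c y)) inferInstance
  obtain ⟨hw0, hw1⟩ := bound (fun y => Even (b y) ∧ Even (c y)) inferInstance
  set p : ℝ := ∏ y, if ¬Even (b y) ∧ ¬Even (c y) then a y else 1 with hp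
  set q : ℝ := ∏ y, if ¬Even (b y) ∧ Even (c y) then a y else 1 with hq
  set r : ℝ := ∏ y, if Even (b y) ∧ ¬Even (c y) then a y else 1 with hr
  set w : ℝ := ∏ y, if Even (b y) ∧ Even (c y) then a y else 1 with hw
  have e1 : mm N h b = p * q := by
    rw [mm, hp, hq, ← Finset.prod_mul_distrib]
    exact Finset.prod_congr rfl fun y _ => by
      by_cases h1 : Even (b y) <;> by_cases h2 : Even (c y) <;> simp [h1, h2, ha]
  have e2 : mm N h c = p * r := by
    rw [mm, hp, hr, ← Finset.prod_mul_distrib]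
    exact Finset.prod_congr rfl fun y _ => by
      by_cases h1 : Even (b y) <;> by_cases h2 : Even (c y) <;> simp [h1, h2, ha]
  have e3 : mm N h (b + c) = q * r := by
    rw [mm, hq, hr, ← Finset.prod_mul_distrib]
    exact Finset.prod_congr rfl fun y _ => by
      by_cases h1 : Even (b y) <;> by_cases h2 : Even (c y) <;>
        simp [Pi.add_apply, Nat.even_add, h1, h2, ha]
  have e4 : mm N h (b + 1) = r * w := by
    rw [mm, hr, hw, ← Finset.prod_mul_distrib]
    exact Finset.prod_congr rfl fun y _ => by
      by_cases h1 : Even (b y) <;> by_cases h2 : Even (c y) <;>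
        simp [Pi.add_apply, Nat.even_add_one, h1, h2, ha]
  have e5 : mm N h (c + 1) = q * w := by
    rw [mm, hq, hw, ← Finset.prod_mul_distrib]
    exact Finset.prod_congr rfl fun y _ => by
      by_cases h1 : Even (b y) <;> by_cases h2 : Even (c y) <;>
        simp [Pi.add_apply, Nat.even_add_one, h1, h2, ha]
  have e6 : mm N h (b + c + 1) = p * w := by
    rw [mm, hp, hw, ← Finset.prod_mul_distrib]
    exact Finset.prod_congr rfl fun y _ => by
      by_cases h1 : Even (b y) <;> by_cases h2 : Even (c y) <;>
        simp [Pi.add_apply, Nat.even_add_one, Nat.even_add, h1, h2, ha]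
  have e7 : mm N h (0 + 1) = p * q * (r * w) := by
    rw [mm, hp, hq, hr, hw, ← Finset.prod_mul_distrib, ← Finset.prod_mul_distrib,
      ← Finset.prod_mul_distrib]
    exact Finset.prod_congr rfl fun y _ => by
      by_cases h1 : Even (b y) <;> by_cases h2 : Even (c y) <;>
        simp [Pi.add_apply, h1, h2, ha]
  have e8 : mm N h 0 = 1 := by simp [mm]
  unfold nu
  rw [e1, e2, e3, e4, e5, e6, e7, e8]
  have := grif_core hp0 hp1 hq0 hq1 hr0 hr1 hw0 hw1
  nlinarith [this]


variable (t : Fin N → ℝ)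

/-- coefficient vector of the edge observable -/
def cx (x : Fin N) : Fin (N + 1) → ℕ := fun y => if (y : ℕ) ≤ (x : ℕ) then 1 else 0

noncomputable def al (x : Fin N) : ℝ := (1 + t x) / 2
noncomputable def be (x : Fin N) : ℝ := (1 - t x) / 2

lemma al_nonneg (ht0 : ∀ x, 0 ≤ t x) (x) : 0 ≤ al N t x := by
  unfold al; linarith [ht0 x]
lemma be_nonneg (ht1 : ∀ x, t x ≤ 1) (x) : 0 ≤ be N t x := by
  unfold be; linarith [ht1 x]

lemma lsum_eq (X : Fin (N + 1) → ℕ) (x : Fin N) : lsum N X x = ∑ y, cx N x y * X y := by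
  unfold lsum cx
  exact Finset.sum_congr rfl fun y _ => by split <;> simp

lemma fx_eq (x : Fin N) (X : Fin (N + 1) → ℕ) :
    (if Even (lsum N X x) then (1 : ℝ) else t x) = al N t x + be N t x * eps N (cx N x) X := by
  rw [eps, ← lsum_eq]
  by_cases hE : Even (lsum N X x)
  · rw [if_pos hE, hE.neg_one_pow]; unfold al be; ring
  · rw [if_neg hE, (Nat.not_even_iff_odd.mp hE).neg_one_pow]; unfold al be; ring

/-- coefficient of a subset in the expansion -/
noncomputable def gam (F S : Finset (Fin N)) : ℝ :=
  (∏ x ∈ S, be N t x) * ∏ x ∈ F \ S, al N t x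

noncomputable def cS (S : Finset (Fin N)) : Fin (N + 1) → ℕ := ∑ x ∈ S, cx N x

lemma gam_nonneg (ht0 : ∀ x, 0 ≤ t x) (ht1 : ∀ x, t x ≤ 1) (F S) : 0 ≤ gam N t F S :=
  mul_nonneg (Finset.prod_nonneg fun x _ => be_nonneg N t ht1 x)
    (Finset.prod_nonneg fun x _ => al_nonneg N t ht0 x)

lemma eps_prod (S : Finset (Fin N)) (X) :
    ∏ x ∈ S, eps N (cx N x) X = eps N (cS N S) X := by
  unfold eps cS
  rw [Finset.prod_pow_eq_pow_sum]
  congr 1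
  rw [Finset.sum_comm]
  exact Finset.sum_congr rfl fun y _ => by
    rw [Finset.sum_apply, Finset.sum_mul]

lemma expand_pt (F : Finset (Fin N)) (X) :
    ∏ x ∈ F, (al N t x + be N t x * eps N (cx N x) X)
      = ∑ S ∈ F.powerset, gam N t F S * eps N (cS N S) X := by
  have : ∀ x ∈ F, al N t x + be N t x * eps N (cx N x) X
      = be N t x * eps N (cx N x) X + al N t x := fun x _ => by ring
  rw [Finset.prod_congr rfl this, Finset.prod_add]
  refine Finset.sum_congr rfl fun S hS => ?_
  rw [Finset.prod_mul_distrib, eps_prod]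
  unfold gam; ring

section Dec2
variable [DecidablePred (fun X : Fin (N + 1) → ℕ => Even (∑ y, X y))]

lemma master_pt (b : Fin (N + 1) → ℕ) (F : Finset (Fin N)) (X : Fin (N + 1) → ℕ) :
    (if Even (∑ y, X y) then
        (eps N b X * ∏ x ∈ F, (al N t x + be N t x * eps N (cx N x) X))
          * ∏ x, poisPMF (h x) (X x) else 0)
      = ∑ S ∈ F.powerset, gam N t F S *
          (if Even (∑ y, X y) then eps N (b + cS N S) X * ∏ x, poisPMF (h x) (X x) else 0) := by
  by_cases hE : Even (∑ y, X y)
  · rw [if_pos hE, expand_pt, Finset.mul_sum, Finset.sum_mul]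
    refine Finset.sum_congr rfl fun S hS => ?_
    rw [if_pos hE, ← eps_mul]
    ring
  · rw [if_neg hE]
    simp [hE]

lemma master_summable (b : Fin (N + 1) → ℕ) (F : Finset (Fin N)) :
    Summable (fun X : Fin (N + 1) → ℕ =>
      if Even (∑ y, X y) then
        (eps N b X * ∏ x ∈ F, (al N t x + be N t x * eps N (cx N x) X))
          * ∏ x, poisPMF (h x) (X x) else 0) := by
  rw [funext (master_pt N h t b F)]
  exact summable_sum fun S _ => (summable_numEps N h (b + cS N S)).mul_left _

lemma master_tsum (b : Fin (N + 1) → ℕ) (F : Finset (Fin N)) :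
    ∑' X : Fin (N + 1) → ℕ,
      (if Even (∑ y, X y) then
        (eps N b X * ∏ x ∈ F, (al N t x + be N t x * eps N (cx N x) X))
          * ∏ x, poisPMF (h x) (X x) else 0)
      = ∑ S ∈ F.powerset, gam N t F S * nu N h (b + cS N S) := by
  rw [tsum_congr (master_pt N h t b F),
    Summable.tsum_finsetSum (fun S _ => (summable_numEps N h (b + cS N S)).mul_left _)]
  exact Finset.sum_congr rfl fun S _ => by
    rw [tsum_mul_left, tsum_numEps]

end Dec2

/-- abstract (unnormalised) numerators -/
noncomputable def numE (b : Fin (N + 1) → ℕ) (F : Finset (Fin N)) : ℝ :=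
  ∑ S ∈ F.powerset, gam N t F S * nu N h (b + cS N S)

noncomputable def num1 (x : Fin N) : ℝ := al N t x * nu N h 0 + be N t x * nu N h (cx N x)

lemma numE_nonneg (ht0 : ∀ x, 0 ≤ t x) (ht1 : ∀ x, t x ≤ 1) (b F) : 0 ≤ numE N h t b F :=
  Finset.sum_nonneg fun S _ =>
    mul_nonneg (gam_nonneg N t ht0 ht1 F S) (nu_pos N h _).le

lemma num1_nonneg (ht0 : ∀ x, 0 ≤ t x) (ht1 : ∀ x, t x ≤ 1) (x) : 0 ≤ num1 N h t x :=
  add_nonneg (mul_nonneg (al_nonneg N t ht0 x) (nu_pos N h 0).le)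
    (mul_nonneg (be_nonneg N t ht1 x) (nu_pos N h _).le)

lemma key_ineq (hh : ∀ x, 0 ≤ h x) (ht0 : ∀ x, 0 ≤ t x) (ht1 : ∀ x, t x ≤ 1) (b F) :
    nu N h b * numE N h t 0 F ≤ numE N h t b F * nu N h 0 := by
  unfold numE
  rw [Finset.mul_sum, Finset.sum_mul]
  refine Finset.sum_le_sum fun S _ => ?_
  have hg := gam_nonneg N t ht0 ht1 F S
  have hgrif := griffiths N h hh b (cS N S)
  calc nu N h b * (gam N t F S * nu N h (0 + cS N S))
      = gam N t F S * (nu N h b * nu N h (cS N S)) := by rw [zero_add]; ring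
    _ ≤ gam N t F S * (nu N h (b + cS N S) * nu N h 0) := by
        exact mul_le_mul_of_nonneg_left hgrif hg
    _ = gam N t F S * nu N h (b + cS N S) * nu N h 0 := by ring

lemma numE_insert (b : Fin (N + 1) → ℕ) (F : Finset (Fin N)) (x₀ : Fin N) (hx : x₀ ∉ F) :
    numE N h t b (insert x₀ F)
      = al N t x₀ * numE N h t b F + be N t x₀ * numE N h t (b + cx N x₀) F := by
  unfold numE
  rw [Finset.sum_powerset_insert hx, Finset.mul_sum, Finset.mul_sum]
  congr 1
  · refine Finset.sum_congr rfl fun S hS => ?_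
    have hS' : S ⊆ F := Finset.mem_powerset.mp hS
    have hx0S : x₀ ∉ S := fun hc => hx (hS' hc)
    have hsd : (insert x₀ F) \ S = insert x₀ (F \ S) := by
      rw [Finset.insert_sdiff_of_notMem _ hx0S]
    have hx0FS : x₀ ∉ F \ S := fun hc => hx (Finset.mem_sdiff.mp hc).1
    rw [gam, hsd, Finset.prod_insert hx0FS, gam]
    ring
  · refine Finset.sum_congr rfl fun S hS => ?_
    have hS' : S ⊆ F := Finset.mem_powerset.mp hS
    have hx0S : x₀ ∉ S := fun hc => hx (hS' hc)
    have hsd : (insert x₀ F) \ (insert x₀ S) = F \ S := by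
      rw [Finset.insert_sdiff_insert]
      ext z
      simp only [Finset.mem_sdiff, Finset.mem_insert]
      constructor
      · rintro ⟨hz, hz2⟩; exact ⟨hz, fun hc => hz2 (Or.inr hc)⟩
      · rintro ⟨hz, hz2⟩
        refine ⟨hz, fun hc => ?_⟩
        rcases hc with hc | hc
        · exact hx (hc ▸ hz)
        · exact hz2 hc
    have hcS : cS N (insert x₀ S) = cx N x₀ + cS N S := by
      unfold cS; rw [Finset.sum_insert hx0S]
    rw [gam, hsd, Finset.prod_insert hx0S, hcS, gam]
    have : b + (cx N x₀ + cS N S) = b + cx N x₀ + cS N S := by rw [add_assoc]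
    rw [this]
    ring

lemma main_ind (hh : ∀ x, 0 ≤ h x) (ht0 : ∀ x, 0 ≤ t x) (ht1 : ∀ x, t x ≤ 1) :
    ∀ F : Finset (Fin N),
      (∏ x ∈ F, num1 N h t x) * nu N h 0 ≤ numE N h t 0 F * nu N h 0 ^ F.card := by
  intro F
  induction F using Finset.induction_on with
  | empty =>
    simp [numE, gam, cS]
  | insert _ _ hx =>
    rename_i x₀ F ih
    have hnu0 := nu_pos N h 0
    have hne := numE_nonneg N h t ht0 ht1 0 F
    have hkey := key_ineq N h t hh ht0 ht1 (cx N x₀) F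
    have hal := al_nonneg N t ht0 x₀
    have hbe := be_nonneg N t ht1 x₀
    have hn1 := num1_nonneg N h t ht0 ht1 x₀
    rw [Finset.prod_insert hx, Finset.card_insert_of_notMem hx,
      numE_insert N h t 0 F x₀ hx, zero_add]
    have step1 : num1 N h t x₀ * numE N h t 0 F
        ≤ (al N t x₀ * numE N h t 0 F + be N t x₀ * numE N h t (cx N x₀) F) * nu N h 0 := by
      have h2 : be N t x₀ * (nu N h (cx N x₀) * numE N h t 0 F)
          ≤ be N t x₀ * (numE N h t (cx N x₀) F * nu N h 0) :=
        mul_le_mul_of_nonneg_left hkey hbe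
      unfold num1; nlinarith [h2]
    calc (num1 N h t x₀ * ∏ x ∈ F, num1 N h t x) * nu N h 0
        = num1 N h t x₀ * ((∏ x ∈ F, num1 N h t x) * nu N h 0) := by ring
      _ ≤ num1 N h t x₀ * (numE N h t 0 F * nu N h 0 ^ F.card) :=
          mul_le_mul_of_nonneg_left ih hn1
      _ = (num1 N h t x₀ * numE N h t 0 F) * nu N h 0 ^ F.card := by ring
      _ ≤ ((al N t x₀ * numE N h t 0 F + be N t x₀ * numE N h t (cx N x₀) F) * nu N h 0)
            * nu N h 0 ^ F.card := by
          exact mul_le_mul_of_nonneg_right step1 (pow_nonneg hnu0.le _)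
      _ = (al N t x₀ * numE N h t 0 F + be N t x₀ * numE N h t (cx N x₀) F)
            * nu N h 0 ^ (F.card + 1) := by ring

section Dec3
variable [DecidablePred (fun X : Fin (N + 1) → ℕ => Even (∑ y, X y))]

lemma denom_eq :
    (∑' X : Fin (N + 1) → ℕ,
      if Even (∑ y, X y) then ∏ x, poisPMF (h x) (X x) else 0) = nu N h 0 := by
  rw [← tsum_numEps N h 0]
  exact tsum_congr fun X => by rw [eps_zero, one_mul]

lemma numer_fx (x : Fin N) :
    (∑' X : Fin (N + 1) → ℕ,
      if Even (∑ y, X y) then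
        (if Even (lsum N X x) then (1:ℝ) else t x) * ∏ x', poisPMF (h x') (X x') else 0)
      = num1 N h t x := by
  have hpt : ∀ X : Fin (N + 1) → ℕ,
      (if Even (∑ y, X y) then
        (if Even (lsum N X x) then (1:ℝ) else t x) * ∏ x', poisPMF (h x') (X x') else 0)
      = (if Even (∑ y, X y) then
          (eps N 0 X * ∏ x' ∈ {x}, (al N t x' + be N t x' * eps N (cx N x') X))
            * ∏ x', poisPMF (h x') (X x') else 0) := by
    intro X
    rw [eps_zero, one_mul, Finset.prod_singleton, fx_eq]
  rw [tsum_congr hpt, master_tsum]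
  rw [show ({x} : Finset (Fin N)).powerset = {∅, {x}} from by
    ext S; simp [Finset.mem_powerset, Finset.subset_singleton_iff]]
  rw [Finset.sum_insert (fun hc => (Finset.singleton_ne_empty x) ((Finset.mem_singleton.mp hc).symm)), Finset.sum_singleton]
  unfold gam cS num1
  simp [al, be]

lemma numer_prod :
    (∑' X : Fin (N + 1) → ℕ,
      if Even (∑ y, X y) then
        (∏ x : Fin N, if Even (lsum N X x) then (1:ℝ) else t x)
          * ∏ x', poisPMF (h x') (X x') else 0)
      = numE N h t 0 Finset.univ := by
  have hpt : ∀ X : Fin (N + 1) → ℕ,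
      (if Even (∑ y, X y) then
        (∏ x : Fin N, if Even (lsum N X x) then (1:ℝ) else t x)
          * ∏ x', poisPMF (h x') (X x') else 0)
      = (if Even (∑ y, X y) then
          (eps N 0 X * ∏ x' ∈ Finset.univ, (al N t x' + be N t x' * eps N (cx N x') X))
            * ∏ x', poisPMF (h x') (X x') else 0) := by
    intro X
    rw [eps_zero, one_mul,
      show (∏ x : Fin N, if Even (lsum N X x) then (1:ℝ) else t x)
          = ∏ x' : Fin N, (al N t x' + be N t x' * eps N (cx N x') X) from
        Finset.prod_congr rfl fun x' _ => fx_eq N t x' X]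
  rw [tsum_congr hpt, master_tsum]
  rfl

end Dec3
end FKG


theorem fkg_poisson_parities (N : ℕ) (h : Fin (N + 1) → ℝ) (hh : ∀ x, 0 ≤ h x)
    (t : Fin N → ℝ) (ht0 : ∀ x, 0 ≤ t x) (ht1 : ∀ x, t x ≤ 1) :
    (∏ x : Fin N, condE N h (fun X => Even (∑ y, X y))
        (fun X => if Even (lsum N X x) then 1 else t x)) ≤
      condE N h (fun X => Even (∑ y, X y))
        (fun X => ∏ x : Fin N, if Even (lsum N X x) then 1 else t x) ∧
    (∏ x : Fin N, (1 + t x) / 2) ≤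
      ∏ x : Fin N, condE N h (fun X => Even (∑ y, X y))
        (fun X => if Even (lsum N X x) then 1 else t x) := by
  have hnu0 := FKG.nu_pos N h 0
  have hcf : ∀ x : Fin N, condE N h (fun X => Even (∑ y, X y))
      (fun X => if Even (lsum N X x) then 1 else t x) = FKG.num1 N h t x / FKG.nu N h 0 := by
    intro x
    unfold condE
    rw [FKG.denom_eq, FKG.numer_fx]
  have hcp : condE N h (fun X => Even (∑ y, X y))
      (fun X => ∏ x : Fin N, if Even (lsum N X x) then 1 else t x)
      = FKG.numE N h t 0 Finset.univ / FKG.nu N h 0 := by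
    unfold condE
    rw [FKG.denom_eq, FKG.numer_prod]
  constructor
  · rw [hcp, Finset.prod_congr rfl fun x _ => hcf x, Finset.prod_div_distrib,
      Finset.prod_const, Finset.card_univ, Fintype.card_fin]
    rw [div_le_div_iff₀ (pow_pos hnu0 N) hnu0]
    have := FKG.main_ind N h t hh ht0 ht1 Finset.univ
    rw [Finset.card_univ, Fintype.card_fin] at this
    linarith [this]
  · rw [Finset.prod_congr rfl fun x _ => hcf x]
    apply Finset.prod_le_prod
    · intro x _; linarith [ht0 x]
    · intro x _
      rw [le_div_iff₀ hnu0]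
      have h1 : 0 ≤ FKG.be N t x * FKG.nu N h (FKG.cx N x) :=
        mul_nonneg (FKG.be_nonneg N t ht1 x) (FKG.nu_pos N h _).le
      unfold FKG.num1 FKG.al at *
      nlinarith [h1]
end
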